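/- arXiv:2503.18200 — 3 statements merged into one kernel-verified Lean document; each statement's English description precedes it below -/
import Mathlib

section
/- Lemma 3.3: Fix a face e_k of T and let Proj_k : ℝ^d → ℝ^d be the orthogonal projection onto the hyperplane H_k containing e_k. There exists a constant C > 0 such that for all polynomials v₀, v_b ∈ P_k, the function φ(X) = (v_b − v₀)(Proj_k X) · l_k(X) · Π_{i≠k} l_i(X)² satisfies ∫_T φ(X)² dx ≤ C h_T ∫_{e_k} (v_b − v₀)² dH^{d−1}. -/
open MeasureTheory RealInnerProductSpace
open scoped BigOperators NNReal

set_option maxHeartbeats 1000000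
set_option synthInstance.maxHeartbeats 400000

noncomputable section

/-- `f` is (the evaluation of) a real polynomial in `d` variables of total degree at most `r`. -/
def IsPolyDeg (d r : ℕ) (f : EuclideanSpace ℝ (Fin d) → ℝ) : Prop :=
  ∃ P : MvPolynomial (Fin d) ℝ, P.totalDegree ≤ r ∧
    ∀ x : EuclideanSpace ℝ (Fin d), f x = MvPolynomial.eval (fun j => x j) P

/-- Partial derivative in the `i`-th coordinate direction. -/
def pder (d : ℕ) (i : Fin d) (f : EuclideanSpace ℝ (Fin d) → ℝ) :
    EuclideanSpace ℝ (Fin d) → ℝ :=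
  fun x => fderiv ℝ f x (EuclideanSpace.single i (1 : ℝ))

/-- The second-order elliptic operator `E f = ∇·(κ∇f) = Σ_{i,j} κ_{ij} ∂_i ∂_j f`
for a constant matrix `κ`. -/
def Eop (d : ℕ) (κ : Matrix (Fin d) (Fin d) ℝ) (f : EuclideanSpace ℝ (Fin d) → ℝ) :
    EuclideanSpace ℝ (Fin d) → ℝ :=
  fun x => ∑ i, ∑ j, κ i j * pder d i (pder d j f) x

/-- `(κ ∇ f) · ν`. -/
def kGradDot (d : ℕ) (κ : Matrix (Fin d) (Fin d) ℝ) (f : EuclideanSpace ℝ (Fin d) → ℝ)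
    (ν : EuclideanSpace ℝ (Fin d)) : EuclideanSpace ℝ (Fin d) → ℝ :=
  fun x => (∑ a, (∑ b, κ a b * pder d b f x) * ν a)

/-- The affine function `l_i(x) = h_T⁻¹ ⟨x - A_i, n_i⟩` vanishing on the face `e_i`. -/
def lfun (d N : ℕ) (hT : ℝ) (A n : Fin N → EuclideanSpace ℝ (Fin d)) (i : Fin N) :
    EuclideanSpace ℝ (Fin d) → ℝ :=
  fun x => hT⁻¹ * ⟪(x - A i), (n i)⟫

/-- Orthogonal projection onto the hyperplane `{x | ⟨x - A, n⟩ = 0}` (for `‖n‖ = 1`). -/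
def projH (d : ℕ) (A n : EuclideanSpace ℝ (Fin d)) :
    EuclideanSpace ℝ (Fin d) → EuclideanSpace ℝ (Fin d) :=
  fun X => X - ⟪X - A, n⟫ • n

namespace Stmt3Aux

open MvPolynomial Module

lemma aux_cons_cont {m : ℕ} (q : MvPolynomial (Fin (m+1)) ℝ) :
    Continuous fun p : (Fin m → ℝ) × ℝ => eval (Fin.cons p.2 p.1) q := by
  refine (continuous_eval q).comp ?_
  refine continuous_pi fun i => ?_
  refine Fin.cases ?_ ?_ i
  · simpa using continuous_snd
  · intro j; simp; exact (continuous_apply j).comp continuous_fst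

/-- The zero set of a nonzero multivariate real polynomial is Lebesgue-null. -/
lemma mvpoly_zero_null : ∀ (m : ℕ) (q : MvPolynomial (Fin m) ℝ), q ≠ 0 →
    volume {v : Fin m → ℝ | eval v q = 0} = 0 := by
  intro m
  induction m with
  | zero =>
    intro q hq
    have : {v : Fin 0 → ℝ | eval v q = 0} = ∅ := by
      rcases Set.eq_empty_or_nonempty {v : Fin 0 → ℝ | eval v q = 0} with h | ⟨v, hv⟩
      · exact h
      · exfalso; apply hq
        apply MvPolynomial.funext
        intro x
        have : x = v := Subsingleton.elim _ _
        rw [this, map_zero]; exact hv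
    rw [this, measure_empty]
  | succ m ih =>
    intro q hq
    set Q := MvPolynomial.finSuccEquiv ℝ m q with hQdef
    have hQ : Q ≠ 0 := by
      intro h
      rw [hQdef] at h
      exact hq (by simpa using congrArg (MvPolynomial.finSuccEquiv ℝ m).symm h)
    set c := Q.leadingCoeff with hcdef
    have hc : c ≠ 0 := Polynomial.leadingCoeff_ne_zero.2 hQ
    have hB : volume {y : Fin m → ℝ | eval y c = 0} = 0 := ih c hc
    set s : Set ((Fin m → ℝ) × ℝ) := {p | eval (Fin.cons p.2 p.1) q = 0} with hsdef
    have hs_closed : IsClosed s := isClosed_eq (aux_cons_cont q) continuous_const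
    have hs_meas : MeasurableSet s := hs_closed.measurableSet
    have hprod : (volume : Measure ((Fin m → ℝ) × ℝ)) s = 0 := by
      rw [MeasureTheory.Measure.volume_eq_prod, Measure.measure_prod_null hs_meas]
      have hae : ∀ᵐ y : Fin m → ℝ, eval y c ≠ 0 := by
        rw [ae_iff]
        simpa using hB
      filter_upwards [hae] with y hy
      simp only [Pi.zero_apply]
      have hQy : Q.map (eval y) ≠ 0 := by
        intro h
        apply hy
        have := congrArg (fun p => Polynomial.coeff p Q.natDegree) h
        simpa [Polynomial.coeff_map] using this
      have : Prod.mk y ⁻¹' s = {t : ℝ | Polynomial.IsRoot (Q.map (eval y)) t} := by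
        ext t
        simp only [Set.mem_preimage, hsdef, Set.mem_setOf_eq, Polynomial.IsRoot]
        rw [MvPolynomial.eval_eq_eval_mv_eval']
      rw [this]
      exact Set.Finite.measure_zero (Polynomial.finite_setOf_isRoot hQy) _
    have hmp : MeasurePreserving
        (fun v : Fin (m+1) → ℝ => ((fun p : ℝ × (Fin m → ℝ) => (p.2, p.1)) ∘
          (MeasurableEquiv.piFinSuccAbove (fun _ : Fin (m+1) => ℝ) 0)) v) volume volume := by
      have h1 := MeasureTheory.volume_preserving_piFinSuccAbove (fun _ : Fin (m+1) => ℝ) 0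
      have h2 : MeasurePreserving (Prod.swap : ℝ × (Fin m → ℝ) → (Fin m → ℝ) × ℝ)
          volume volume := by
        rw [MeasureTheory.Measure.volume_eq_prod, MeasureTheory.Measure.volume_eq_prod]
        exact MeasureTheory.Measure.measurePreserving_swap
      exact h2.comp h1
    have hpre : {v : Fin (m+1) → ℝ | eval v q = 0} =
        (fun v : Fin (m+1) → ℝ => ((fun p : ℝ × (Fin m → ℝ) => (p.2, p.1)) ∘
          (MeasurableEquiv.piFinSuccAbove (fun _ : Fin (m+1) => ℝ) 0)) v) ⁻¹' s := by
      ext v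
      simp only [Set.mem_setOf_eq, Set.mem_preimage, Function.comp_apply, hsdef,
        MeasurableEquiv.piFinSuccAbove_apply]
      simp only [Fin.insertNthEquiv_symm_apply]
      rw [show (Fin.cons (v 0) (Fin.removeNth 0 v) : Fin (m+1) → ℝ) = v from by
        rw [Fin.removeNth_zero]; exact Fin.cons_self_tail v]
    rw [hpre, hmp.measure_preimage hs_meas.nullMeasurableSet]
    exact hprod

lemma hausdorff_eq_smul_volume (m : ℕ) :
    ∃ c : ℝ≥0, (μH[(m:ℝ)] : Measure (EuclideanSpace ℝ (Fin m))) = c • volume := by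
  have h : (m : ℝ) = ((finrank ℝ (EuclideanSpace ℝ (Fin m)) : ℕ) : ℝ) := by
    rw [finrank_euclideanSpace_fin]
  rw [h]
  exact ⟨_, Measure.isAddLeftInvariant_eq_smul
    μH[(finrank ℝ (EuclideanSpace ℝ (Fin m)) : ℝ)] volume⟩

lemma mvpoly_zero_null_W (m : ℕ) (q : MvPolynomial (Fin m) ℝ) (hq : q ≠ 0) :
    volume {y : EuclideanSpace ℝ (Fin m) | eval (fun i => y i) q = 0} = 0 := by
  have hmp := EuclideanSpace.volume_preserving_symm_measurableEquiv_toLp (Fin m)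
  have hmeas : MeasurableSet {v : Fin m → ℝ | eval v q = 0} :=
    (isClosed_eq (MvPolynomial.continuous_eval q) continuous_const).measurableSet
  have hpre : {y : EuclideanSpace ℝ (Fin m) | eval (fun i => y i) q = 0}
      = (MeasurableEquiv.toLp 2 (Fin m → ℝ)).symm ⁻¹' {v : Fin m → ℝ | eval v q = 0} := rfl
  rw [hpre, hmp.measure_preimage hmeas.nullMeasurableSet]
  exact mvpoly_zero_null m q hq

lemma linmap_factor {V W₁ W₂ : Type*} [NormedAddCommGroup W₁] [NormedSpace ℝ W₁]
    [NormedAddCommGroup W₂] [NormedSpace ℝ W₂] [AddCommGroup V] [Module ℝ V]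
    [Module.Finite ℝ V]
    (u : V →ₗ[ℝ] W₁) (v : V →ₗ[ℝ] W₂) (h : ∀ x, v x = 0 → u x = 0) :
    ∃ C : ℝ, 0 ≤ C ∧ ∀ x, ‖u x‖ ≤ C * ‖v x‖ := by
  haveI : FiniteDimensional ℝ V := inferInstance
  obtain ⟨g, hg⟩ := v.rangeRestrict.exists_rightInverse_of_surjective
    (LinearMap.range_rangeRestrict v)
  let w0 : (LinearMap.range v) →ₗ[ℝ] W₁ := u.comp g
  let w : (LinearMap.range v) →L[ℝ] W₁ := LinearMap.toContinuousLinearMap w0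
  refine ⟨‖w‖, w.opNorm_nonneg, fun x => ?_⟩
  have hx : u x = w ⟨v x, LinearMap.mem_range_self v x⟩ := by
    have h1 : v.rangeRestrict (g ⟨v x, LinearMap.mem_range_self v x⟩)
        = ⟨v x, LinearMap.mem_range_self v x⟩ := by
      rw [← LinearMap.comp_apply, hg]; rfl
    have h2 : v (g ⟨v x, LinearMap.mem_range_self v x⟩) = v x := congrArg Subtype.val h1
    have h3 : v (x - g ⟨v x, LinearMap.mem_range_self v x⟩) = 0 := by
      rw [map_sub, h2, sub_self]
    have h4 := h _ h3
    rw [map_sub, sub_eq_zero] at h4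
    exact h4
  rw [hx]
  calc ‖w ⟨v x, LinearMap.mem_range_self v x⟩‖
      ≤ ‖w‖ * ‖(⟨v x, LinearMap.mem_range_self v x⟩ : LinearMap.range v)‖ := w.le_opNorm _
    _ = ‖w‖ * ‖v x‖ := rfl

lemma sq_integral_eq {α : Type*} [MeasurableSpace α] {μ : Measure α} {f : α → ℝ}
    (hf : MemLp f 2 μ) : ∫ x, (f x)^2 ∂μ = ‖hf.toLp f‖^2 := by
  have h1 : (inner ℝ (hf.toLp f) (hf.toLp f) : ℝ)
      = ∫ x, (inner ℝ (((hf.toLp f : Lp ℝ 2 μ) : α → ℝ) x)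
          (((hf.toLp f : Lp ℝ 2 μ) : α → ℝ) x) : ℝ) ∂μ :=
    L2.inner_def _ _
  have h2 : ∫ x, (inner ℝ (((hf.toLp f : Lp ℝ 2 μ) : α → ℝ) x)
        (((hf.toLp f : Lp ℝ 2 μ) : α → ℝ) x) : ℝ) ∂μ
      = ∫ x, (f x)^2 ∂μ := by
    refine integral_congr_ae ?_
    filter_upwards [hf.coeFn_toLp] with x hx
    simp only [RCLike.inner_apply, starRingEnd_apply, star_trivial]
    rw [hx]; ring
  rw [← real_inner_self_eq_norm_sq, h1]
  exact h2.symm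

lemma memL2_aux {d : ℕ} {μ : Measure (EuclideanSpace ℝ (Fin d))} [IsFiniteMeasure μ]
    {s : Set (EuclideanSpace ℝ (Fin d))} (hμs : μ sᶜ = 0) (hs : Bornology.IsBounded s)
    {f : EuclideanSpace ℝ (Fin d) → ℝ} (hf : Continuous f) : MemLp f 2 μ := by
  obtain ⟨C, hC⟩ := (hs.isCompact_closure).exists_bound_of_continuousOn hf.continuousOn
  refine MemLp.of_bound hf.aestronglyMeasurable C ?_
  rw [Filter.eventually_iff, mem_ae_iff]
  refine measure_mono_null ?_ hμs
  intro x hx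
  simp only [Set.mem_compl_iff, Set.mem_setOf_eq] at hx ⊢
  intro hxs
  exact hx (hC x (subset_closure hxs))

lemma hyperplane_iso {d : ℕ} (hd : 2 ≤ d) (A₀ n₀ : EuclideanSpace ℝ (Fin d)) (hn : ‖n₀‖ = 1) :
    ∃ ψ : EuclideanSpace ℝ (Fin (d-1)) → EuclideanSpace ℝ (Fin d),
      Isometry ψ ∧ Set.range ψ = {x | ⟪x - A₀, n₀⟫ = 0} ∧
      ∃ M : EuclideanSpace ℝ (Fin (d-1)) →ₗ[ℝ] EuclideanSpace ℝ (Fin d),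
        ∀ y, ψ y = A₀ + M y := by
  have hn0 : n₀ ≠ 0 := by
    intro h; rw [h, norm_zero] at hn; norm_num at hn
  set K : Submodule ℝ (EuclideanSpace ℝ (Fin d)) := (ℝ ∙ n₀)ᗮ with hK
  have hrank : finrank ℝ K = d - 1 := by
    have h1 : finrank ℝ (ℝ ∙ n₀) = 1 := finrank_span_singleton hn0
    have h2 := Submodule.finrank_add_finrank_orthogonal
      (K := (ℝ ∙ n₀ : Submodule ℝ (EuclideanSpace ℝ (Fin d))))
    rw [h1, finrank_euclideanSpace_fin] at h2
    rw [hK]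
    omega
  let b := (stdOrthonormalBasis ℝ K).reindex (finCongr hrank)
  let L : EuclideanSpace ℝ (Fin (d-1)) ≃ₗᵢ[ℝ] K := b.repr.symm
  refine ⟨fun y => A₀ + (L y : EuclideanSpace ℝ (Fin d)), ?_, ?_, ?_⟩
  · refine Isometry.of_dist_eq fun y z => ?_
    rw [dist_eq_norm, dist_eq_norm]
    have : A₀ + (L y : EuclideanSpace ℝ (Fin d)) - (A₀ + (L z : EuclideanSpace ℝ (Fin d)))
        = ((L y - L z : K) : EuclideanSpace ℝ (Fin d)) := by
      rw [Submodule.coe_sub]; abel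
    rw [this]
    rw [Submodule.norm_coe]
    rw [← dist_eq_norm, L.isometry.dist_eq y z, dist_eq_norm]
  · ext x
    simp only [Set.mem_range, Set.mem_setOf_eq]
    constructor
    · rintro ⟨y, rfl⟩
      have hmem : (L y : EuclideanSpace ℝ (Fin d)) ∈ (ℝ ∙ n₀)ᗮ := (L y).2
      have := (Submodule.mem_orthogonal _ _).mp hmem n₀ (Submodule.mem_span_singleton_self n₀)
      rw [add_sub_cancel_left]
      rw [real_inner_comm]
      exact this
    · intro hx
      have hmem : x - A₀ ∈ K := by
        rw [hK, Submodule.mem_orthogonal]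
        intro u hu
        obtain ⟨a, rfl⟩ := Submodule.mem_span_singleton.mp hu
        rw [real_inner_smul_left, real_inner_comm, hx, mul_zero]
      refine ⟨L.symm ⟨x - A₀, hmem⟩, ?_⟩
      rw [LinearIsometryEquiv.apply_symm_apply]
      simp
  · refine ⟨(K.subtype).comp (L.toLinearEquiv.toLinearMap), fun y => rfl⟩

lemma poly_comp_affine {d m : ℕ} (A₀ : EuclideanSpace ℝ (Fin d))
    (M : EuclideanSpace ℝ (Fin m) →ₗ[ℝ] EuclideanSpace ℝ (Fin d))
    (P : MvPolynomial (Fin d) ℝ) :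
    ∃ q : MvPolynomial (Fin m) ℝ,
      ∀ y : EuclideanSpace ℝ (Fin m),
        eval (fun i => y i) q = eval (fun j => (A₀ + M y) j) P := by
  classical
  set g : Fin d → MvPolynomial (Fin m) ℝ := fun j => C (A₀ j) +
    ∑ i, C ((M (EuclideanSpace.single i 1)) j) * X i with hg
  refine ⟨aeval g P, fun y => ?_⟩
  have h1 : eval (fun i => y i) (aeval g P) = eval (fun j => eval (fun i => y i) (g j)) P := by
    rw [MvPolynomial.aeval_def]
    rw [MvPolynomial.eval₂_comp_left (eval (fun i => y i))]
    congr 1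
    ext r
    simp [MvPolynomial.algebraMap_eq]
  rw [h1]
  have h2 : (fun j => eval (fun i => y i) (g j)) = (fun j => (A₀ + M y) j) := by
    funext j
    let coord : EuclideanSpace ℝ (Fin d) →ₗ[ℝ] ℝ :=
      { toFun := fun v => v j, map_add' := fun a b => rfl, map_smul' := fun c a => rfl }
    have hy : ∑ i, y i • EuclideanSpace.single i (1:ℝ) = y := by
      have := (EuclideanSpace.basisFun (Fin m) ℝ).sum_repr y
      simpa [EuclideanSpace.basisFun_apply, EuclideanSpace.basisFun_repr] using this
    have h4 : (M y) j = ∑ i, y i * (M (EuclideanSpace.single i 1)) j := by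
      have h5 : (coord.comp M) y = ∑ i, y i • (coord.comp M) (EuclideanSpace.single i 1) := by
        conv_lhs => rw [← hy]
        rw [map_sum]
        refine Finset.sum_congr rfl fun i _ => ?_
        rw [LinearMap.map_smul]
      have h5' := h5; simp only [smul_eq_mul] at h5'; exact h5'
    have h6 : (A₀ + M y) j = A₀ j + (M y) j := rfl
    rw [h6, h4, hg]
    simp [eval_sum]
    ring_nf
    exact Finset.sum_congr rfl fun i _ => mul_comm _ _
  rw [h2]

end Stmt3Aux

open Stmt3Aux MvPolynomial

/-- Lemma 3.3. -/
theorem stmt3 (d N : ℕ) (hd : 2 ≤ d) (hN : 1 ≤ N)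
    (T : Set (EuclideanSpace ℝ (Fin d))) (hTopen : IsOpen T) (hTne : T.Nonempty)
    (hTbdd : Bornology.IsBounded T)
    (e : Fin N → Set (EuclideanSpace ℝ (Fin d)))
    (A n : Fin N → EuclideanSpace ℝ (Fin d)) (hn : ∀ i, ‖n i‖ = 1)
    (he_cpt : ∀ i, IsCompact (e i))
    (he_sub : ∀ i, e i ⊆ {x | ⟪x - A i, n i⟫ = 0})
    (he_pos : ∀ i, 0 < μH[((d : ℝ) - 1)] (e i))
    (hbd : frontier T = ⋃ i, e i)
    (hT : ℝ) (hT0 : 0 < hT) (hTdiam : hT = Metric.diam T)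
    (k : ℕ) (hk : 1 ≤ k) (k₀ : Fin N) :
    ∃ C > (0 : ℝ), ∀ v₀ vb : EuclideanSpace ℝ (Fin d) → ℝ,
      IsPolyDeg d k v₀ → IsPolyDeg d k vb →
      ∫ x in T, ((vb (projH d (A k₀) (n k₀) x) - v₀ (projH d (A k₀) (n k₀) x)) *
          lfun d N hT A n k₀ x * ∏ i ∈ Finset.univ.erase k₀, (lfun d N hT A n i x) ^ 2) ^ 2 ≤
        C * hT * ∫ x in e k₀, (vb x - v₀ x) ^ 2 ∂μH[((d : ℝ) - 1)] := by
  classical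
  set δ : ℝ := (d : ℝ) - 1 with hδdef
  have hδ0 : 0 ≤ δ := by
    rw [hδdef]
    have : (2:ℝ) ≤ (d:ℝ) := by exact_mod_cast hd
    linarith
  have hδm : δ = ((d - 1 : ℕ) : ℝ) := by
    rw [hδdef, Nat.cast_sub (by omega : 1 ≤ d), Nat.cast_one]
  set A₀ := A k₀ with hA₀
  set n₀ := n k₀ with hn₀
  obtain ⟨ψ, hψ_iso, hψ_range, M, hψ_aff⟩ := hyperplane_iso hd A₀ n₀ (hn k₀)
  obtain ⟨c, hc⟩ := hausdorff_eq_smul_volume (d - 1)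
  -- transporting the Hausdorff measure to the parametrizing Euclidean space
  have htrans : ∀ S : Set (EuclideanSpace ℝ (Fin d)), S ⊆ {x | ⟪x - A₀, n₀⟫ = 0} →
      μH[δ] S = μH[δ] (ψ ⁻¹' S) := by
    intro S hS
    have hSr : S ⊆ Set.range ψ := by rw [hψ_range]; exact hS
    conv_lhs => rw [← Set.image_preimage_eq_of_subset hSr]
    exact hψ_iso.hausdorffMeasure_image (Or.inl hδ0) _
  have hWc : (μH[δ] : Measure (EuclideanSpace ℝ (Fin (d-1)))) = c • volume := by
    rw [hδm]; exact hc
  have hWnull : ∀ Sw : Set (EuclideanSpace ℝ (Fin (d-1))), volume Sw = 0 → μH[δ] Sw = 0 := by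
    intro Sw h
    rw [hWc, Measure.smul_apply, h, smul_zero]
  have hWfin : ∀ Sw : Set (EuclideanSpace ℝ (Fin (d-1))), volume Sw < ⊤ → μH[δ] Sw < ⊤ := by
    intro Sw h
    rw [hWc, Measure.smul_apply, ENNReal.smul_def]
    exact ENNReal.mul_lt_top ENNReal.coe_lt_top h
  -- finiteness of the Hausdorff measure of the face
  have hKcpt : IsCompact (ψ ⁻¹' (e k₀)) := by
    refine Metric.isCompact_of_isClosed_isBounded ?_ ?_
    · exact ((he_cpt k₀).isClosed).preimage hψ_iso.continuous
    · exact hψ_iso.antilipschitz.isBounded_preimage (he_cpt k₀).isBounded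
  have hfin : μH[δ] (e k₀) < ⊤ := by
    rw [htrans _ (he_sub k₀)]
    exact hWfin _ hKcpt.measure_lt_top
  set μ : Measure (EuclideanSpace ℝ (Fin d)) := μH[δ].restrict (e k₀) with hμdef
  set ν : Measure (EuclideanSpace ℝ (Fin d)) := volume.restrict T with hνdef
  have hemeas : MeasurableSet (e k₀) := (he_cpt k₀).isClosed.measurableSet
  haveI : IsFiniteMeasure μ := by
    constructor
    rw [hμdef, Measure.restrict_apply_univ]
    exact hfin
  haveI : IsFiniteMeasure ν := by
    constructor
    rw [hνdef, Measure.restrict_apply_univ]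
    exact hTbdd.measure_lt_top
  have hμcompl : μ (e k₀)ᶜ = 0 := by
    rw [hμdef, Measure.restrict_apply hemeas.compl, Set.compl_inter_self, measure_empty]
  have hνcompl : ν Tᶜ = 0 := by
    rw [hνdef, Measure.restrict_apply hTopen.measurableSet.compl, Set.compl_inter_self,
      measure_empty]
  -- continuity facts
  have hcoords : Continuous fun x : EuclideanSpace ℝ (Fin d) => (fun j => x j : Fin d → ℝ) :=
    continuous_pi fun j => (continuous_apply j).comp (PiLp.continuous_ofLp 2 fun _ : Fin d => ℝ)
  have hev : ∀ P : MvPolynomial (Fin d) ℝ,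
      Continuous fun x : EuclideanSpace ℝ (Fin d) => eval (fun j => x j) P :=
    fun P => (MvPolynomial.continuous_eval P).comp hcoords
  have hlfun_cont : ∀ i, Continuous (lfun d N hT A n i) := by
    intro i
    exact continuous_const.mul ((continuous_id.sub continuous_const).inner continuous_const)
  have hproj_cont : Continuous (projH d A₀ n₀) := by
    unfold projH
    exact continuous_id.sub
      (Continuous.smul (f := fun X => ⟪X - A₀, n₀⟫) (g := fun _ => n₀) ((continuous_id.sub continuous_const).inner continuous_const) continuous_const)
  set Lw : EuclideanSpace ℝ (Fin d) → ℝ := fun x =>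
    lfun d N hT A n k₀ x * ∏ i ∈ Finset.univ.erase k₀, (lfun d N hT A n i x) ^ 2 with hLwdef
  have hLw_cont : Continuous Lw := by
    refine (hlfun_cont k₀).mul ?_
    exact continuous_finset_prod _ fun i _ => (hlfun_cont i).pow 2
  -- the two function families
  set fu : MvPolynomial (Fin d) ℝ → EuclideanSpace ℝ (Fin d) → ℝ :=
    fun P x => eval (fun j => projH d A₀ n₀ x j) P * Lw x with hfudef
  set fv : MvPolynomial (Fin d) ℝ → EuclideanSpace ℝ (Fin d) → ℝ :=
    fun P x => eval (fun j => x j) P with hfvdef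
  have hfu_cont : ∀ P, Continuous (fu P) :=
    fun P => (((hev P).comp hproj_cont)).mul hLw_cont
  have hmemu : ∀ P, MemLp (fu P) 2 ν := fun P => memL2_aux hνcompl hTbdd (hfu_cont P)
  have hmemv : ∀ P, MemLp (fv P) 2 μ :=
    fun P => memL2_aux hμcompl (he_cpt k₀).isBounded (hev P)
  set V := MvPolynomial.restrictTotalDegree (Fin d) ℝ k with hVdef
  -- the bundled linear maps into L²
  let u : V →ₗ[ℝ] Lp ℝ 2 ν :=
    { toFun := fun P => (hmemu P).toLp (fu P)
      map_add' := by
        intro P Q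
        have h : fu ((P + Q : V) : MvPolynomial (Fin d) ℝ)
            = fu (P : MvPolynomial (Fin d) ℝ) + fu (Q : MvPolynomial (Fin d) ℝ) := by
          funext x
          simp only [hfudef, Submodule.coe_add, map_add, Pi.add_apply]
          ring
        refine Eq.trans (MemLp.toLp_congr (hmemu _) ((hmemu _).add (hmemu _))
          (Filter.Eventually.of_forall fun x => congrFun h x)) (MemLp.toLp_add _ _)
      map_smul' := by
        intro a P
        have h : fu ((a • P : V) : MvPolynomial (Fin d) ℝ)
            = a • fu (P : MvPolynomial (Fin d) ℝ) := by
          funext x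
          simp only [hfudef, Submodule.coe_smul, MvPolynomial.smul_eval, Pi.smul_apply,
            smul_eq_mul]
          ring
        simp only [RingHom.id_apply]
        refine Eq.trans (MemLp.toLp_congr (hmemu _) ((hmemu _).const_smul a)
          (Filter.Eventually.of_forall fun x => congrFun h x)) (MemLp.toLp_const_smul a _) }
  let v : V →ₗ[ℝ] Lp ℝ 2 μ :=
    { toFun := fun P => (hmemv P).toLp (fv P)
      map_add' := by
        intro P Q
        have h : fv ((P + Q : V) : MvPolynomial (Fin d) ℝ)
            = fv (P : MvPolynomial (Fin d) ℝ) + fv (Q : MvPolynomial (Fin d) ℝ) := by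
          funext x
          simp only [hfvdef, Submodule.coe_add, map_add, Pi.add_apply]
        refine Eq.trans (MemLp.toLp_congr (hmemv _) ((hmemv _).add (hmemv _))
          (Filter.Eventually.of_forall fun x => congrFun h x)) (MemLp.toLp_add _ _)
      map_smul' := by
        intro a P
        have h : fv ((a • P : V) : MvPolynomial (Fin d) ℝ)
            = a • fv (P : MvPolynomial (Fin d) ℝ) := by
          funext x
          simp only [hfvdef, Submodule.coe_smul, MvPolynomial.smul_eval, Pi.smul_apply,
            smul_eq_mul]
        simp only [RingHom.id_apply]
        refine Eq.trans (MemLp.toLp_congr (hmemv _) ((hmemv _).const_smul a)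
          (Filter.Eventually.of_forall fun x => congrFun h x)) (MemLp.toLp_const_smul a _) }
  -- the projection lands in the hyperplane
  have hproj_mem : ∀ x, ⟪projH d A₀ n₀ x - A₀, n₀⟫ = 0 := by
    intro x
    show ⟪x - ⟪x - A₀, n₀⟫ • n₀ - A₀, n₀⟫ = 0
    have h1 : x - ⟪x - A₀, n₀⟫ • n₀ - A₀ = (x - A₀) - ⟪x - A₀, n₀⟫ • n₀ := by abel
    rw [h1, inner_sub_left, real_inner_smul_left]
    have h2 : ⟪n₀, n₀⟫ = (1:ℝ) := by
      rw [real_inner_self_eq_norm_mul_norm]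
      rw [hn₀, hn k₀, mul_one]
    rw [h2, mul_one, sub_self]
  -- kernel condition
  have hker : ∀ P : V, v P = 0 → u P = 0 := by
    intro P hvP
    have h0 : fv (P : MvPolynomial (Fin d) ℝ) =ᵐ[μ] 0 := by
      have h00 : (hmemv (P : MvPolynomial (Fin d) ℝ)).toLp (fv (P : MvPolynomial (Fin d) ℝ))
          = MemLp.toLp (0 : EuclideanSpace ℝ (Fin d) → ℝ) MemLp.zero := by
        rw [MemLp.toLp_zero]
        exact hvP
      exact (MemLp.toLp_eq_toLp_iff _ _).mp h00
    -- positive measure zero set on the hyperplane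
    set Z : Set (EuclideanSpace ℝ (Fin d)) :=
      {x | x ∈ e k₀ ∧ fv (P : MvPolynomial (Fin d) ℝ) x = 0} with hZdef
    have hZsub : Z ⊆ {x | ⟪x - A₀, n₀⟫ = 0} := fun x hx => he_sub k₀ hx.1
    have hZpos : 0 < μH[δ] Z := by
      have hae : ∀ᵐ x ∂(μH[δ]), x ∈ e k₀ → fv (P : MvPolynomial (Fin d) ℝ) x = 0 :=
        (ae_restrict_iff' hemeas).mp h0
      have hnull : μH[δ] (e k₀ \ Z) = 0 := by
        rw [ae_iff] at hae
        refine measure_mono_null ?_ hae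
        intro x hx
        simp only [Set.mem_diff, hZdef, Set.mem_setOf_eq] at hx
        simp only [Set.mem_setOf_eq]
        push_neg
        exact ⟨hx.1, fun h => (hx.2 ⟨hx.1, h⟩).elim⟩
      by_contra hle
      push_neg at hle
      have hZ0 : μH[δ] Z = 0 := le_antisymm hle zero_le
      have : μH[δ] (e k₀) = 0 := by
        have hsub : e k₀ ⊆ Z ∪ (e k₀ \ Z) := by
          intro x hx
          by_cases hxZ : x ∈ Z
          · exact Or.inl hxZ
          · exact Or.inr ⟨hx, hxZ⟩
        refine measure_mono_null hsub ?_
        refine le_antisymm ?_ zero_le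
        calc μH[δ] (Z ∪ (e k₀ \ Z)) ≤ μH[δ] Z + μH[δ] (e k₀ \ Z) := measure_union_le _ _
          _ = 0 := by rw [hZ0, hnull, add_zero]
      exact absurd this (he_pos k₀).ne'
    -- the polynomial vanishes on the hyperplane
    obtain ⟨q, hq⟩ := poly_comp_affine A₀ M (P : MvPolynomial (Fin d) ℝ)
    have hq0 : q = 0 := by
      by_contra hqne
      have hWZ : volume (ψ ⁻¹' Z) = 0 := by
        refine measure_mono_null ?_ (mvpoly_zero_null_W (d-1) q hqne)
        intro y hy
        simp only [Set.mem_preimage, hZdef, Set.mem_setOf_eq] at hy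
        simp only [Set.mem_setOf_eq]
        rw [hq y, ← hψ_aff y]
        exact hy.2
      have := htrans Z hZsub
      rw [this] at hZpos
      rw [hWnull _ hWZ] at hZpos
      exact lt_irrefl _ hZpos
    have hvanish : ∀ x ∈ {x : EuclideanSpace ℝ (Fin d) | ⟪x - A₀, n₀⟫ = 0},
        fv (P : MvPolynomial (Fin d) ℝ) x = 0 := by
      intro x hx
      have : x ∈ Set.range ψ := by rw [hψ_range]; exact hx
      obtain ⟨y, rfl⟩ := this
      have := hq y
      rw [hq0, map_zero] at this
      rw [← hψ_aff y] at this
      exact this.symm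
    have hfu0 : fu (P : MvPolynomial (Fin d) ℝ) = 0 := by
      funext x
      simp only [hfudef, Pi.zero_apply]
      rw [show eval (fun j => projH d A₀ n₀ x j) (P : MvPolynomial (Fin d) ℝ)
          = fv (P : MvPolynomial (Fin d) ℝ) (projH d A₀ n₀ x) from rfl]
      rw [hvanish _ (hproj_mem x), zero_mul]
    show (hmemu (P : MvPolynomial (Fin d) ℝ)).toLp _ = 0
    rw [MemLp.toLp_congr (hmemu _) MemLp.zero (by rw [hfu0])]
    exact MemLp.toLp_zero _
  -- factorization through a finite-dimensional space
  obtain ⟨Cw, hCw0, hCw⟩ := linmap_factor u v hker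
  refine ⟨(Cw^2 + 1) / hT, by positivity, ?_⟩
  intro v₀ vb h₀ hb
  obtain ⟨P0, hP0deg, hP0⟩ := h₀
  obtain ⟨Pb, hPbdeg, hPb⟩ := hb
  set Pw : MvPolynomial (Fin d) ℝ := Pb - P0 with hPwdef
  have hPwmem : Pw ∈ V := by
    rw [hVdef, MvPolynomial.mem_restrictTotalDegree]
    exact le_trans (MvPolynomial.totalDegree_sub _ _) (max_le hPbdeg hP0deg)
  set Pv : V := ⟨Pw, hPwmem⟩ with hPvdef
  have hfveq : ∀ x, vb x - v₀ x = fv Pw x := by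
    intro x
    rw [hPb x, hP0 x, hfvdef]
    simp only [hPwdef, map_sub]
  have hfueq : ∀ x : EuclideanSpace ℝ (Fin d),
      ((vb (projH d A₀ n₀ x) - v₀ (projH d A₀ n₀ x)) *
        lfun d N hT A n k₀ x * ∏ i ∈ Finset.univ.erase k₀, (lfun d N hT A n i x) ^ 2) ^ 2
      = (fu Pw x) ^ 2 := by
    intro x
    rw [hfveq (projH d A₀ n₀ x)]
    simp only [hfudef, hfvdef, hLwdef]
    ring
  -- rewrite both integrals
  have hLHS : ∫ x in T, ((vb (projH d (A k₀) (n k₀) x) - v₀ (projH d (A k₀) (n k₀) x)) *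
          lfun d N hT A n k₀ x * ∏ i ∈ Finset.univ.erase k₀, (lfun d N hT A n i x) ^ 2) ^ 2
      = ∫ x, (fu Pw x) ^ 2 ∂ν := by
    rw [hνdef]
    refine integral_congr_ae (Filter.Eventually.of_forall fun x => ?_)
    rw [← hA₀, ← hn₀]
    exact hfueq x
  have hRHS : ∫ x in e k₀, (vb x - v₀ x) ^ 2 ∂μH[((d : ℝ) - 1)]
      = ∫ x, (fv Pw x) ^ 2 ∂μ := by
    rw [hμdef]
    refine integral_congr_ae (Filter.Eventually.of_forall fun x => ?_)
    show (vb x - v₀ x) ^ 2 = (fv Pw x) ^ 2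
    rw [hfveq x]
  rw [hLHS, hRHS]
  have hnorm_u : ∫ x, (fu Pw x) ^ 2 ∂ν = ‖u Pv‖ ^ 2 := sq_integral_eq (hmemu Pw)
  have hnorm_v : ∫ x, (fv Pw x) ^ 2 ∂μ = ‖v Pv‖ ^ 2 := sq_integral_eq (hmemv Pw)
  rw [hnorm_u, hnorm_v]
  have hbound : ‖u Pv‖ ^ 2 ≤ Cw ^ 2 * ‖v Pv‖ ^ 2 := by
    have := hCw Pv
    calc ‖u Pv‖ ^ 2 ≤ (Cw * ‖v Pv‖) ^ 2 := by
          exact pow_le_pow_left₀ (norm_nonneg _) this 2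
      _ = Cw ^ 2 * ‖v Pv‖ ^ 2 := by ring
  have hfinal : (Cw ^ 2 + 1) / hT * hT = Cw ^ 2 + 1 := by
    field_simp
  rw [hfinal]
  calc ‖u Pv‖ ^ 2 ≤ Cw ^ 2 * ‖v Pv‖ ^ 2 := hbound
    _ ≤ (Cw ^ 2 + 1) * ‖v Pv‖ ^ 2 := by
        have : (0:ℝ) ≤ ‖v Pv‖ ^ 2 := sq_nonneg _
        nlinarith
end
end

section
/- Weighted domain inverse inequality (estimate (3.4) used in the proof of Lemma 3.1): Let T ⊆ ℝ^d be a nonempty bounded open set and let Φ : ℝ^d → ℝ be continuous with Φ(x) ≥ 0 for all x ∈ T. Suppose there exist a nonempty open set T̂ ⊆ T and a constant ρ₀ > 0 with Φ(x) ≥ ρ₀ for all x ∈ T̂. Then for every integer r ≥ 0 there exists a constant C > 0 such that ∫_T Φ(x) q(x)² dx ≥ C ∫_T q(x)² dx for every real polynomial function q on ℝ^d of total degree at most r. -/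
open MeasureTheory
open scoped BigOperators

set_option synthInstance.maxHeartbeats 1000000
set_option maxHeartbeats 1000000

noncomputable section

namespace Stmt13Aux

variable {d : ℕ}

/-- Evaluation of a multivariate polynomial on Euclidean space. -/
def fe (P : MvPolynomial (Fin d) ℝ) : EuclideanSpace ℝ (Fin d) → ℝ :=
  fun x => MvPolynomial.eval (fun j => x j) P

lemma fe_analytic (P : MvPolynomial (Fin d) ℝ) :
    AnalyticOnNhd ℝ (fe P) Set.univ := by
  have h := AnalyticOnNhd.eval_continuousLinearMap'
    (𝕜 := ℝ) (fun j : Fin d => EuclideanSpace.proj j) P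
  exact h

lemma fe_continuous (P : MvPolynomial (Fin d) ℝ) : Continuous (fe P) := by
  rw [continuous_iff_continuousAt]
  exact fun x => (fe_analytic P x (Set.mem_univ x)).continuousAt

lemma fe_add (P Q : MvPolynomial (Fin d) ℝ) : fe (P + Q) = fe P + fe Q := by
  funext x; simp [fe]

lemma fe_smul (c : ℝ) (P : MvPolynomial (Fin d) ℝ) : fe (c • P) = c • fe P := by
  funext x; simp [fe, MvPolynomial.smul_eq_C_mul]

lemma integrableOn_of_bounded {g : EuclideanSpace ℝ (Fin d) → ℝ} (hg : Continuous g)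
    {s : Set (EuclideanSpace ℝ (Fin d))} (hs : Bornology.IsBounded s) :
    IntegrableOn g s := by
  exact (hg.continuousOn.integrableOn_compact hs.isCompact_closure).mono_set subset_closure

lemma memL2 (P : MvPolynomial (Fin d) ℝ) {s : Set (EuclideanSpace ℝ (Fin d))}
    (hs : Bornology.IsBounded s) (hms : MeasurableSet s) :
    MemLp (fe P) 2 (volume.restrict s) := by
  refine (memLp_two_iff_integrable_sq
    ((fe_continuous P).aestronglyMeasurable.restrict)).mpr ?_
  rw [← IntegrableOn]
  exact integrableOn_of_bounded ((fe_continuous P).pow 2) hs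

variable (d) in
/-- The linear map from polynomials of total degree at most `r` to `L²(s)`. -/
def toL2 (r : ℕ) {s : Set (EuclideanSpace ℝ (Fin d))}
    (hs : Bornology.IsBounded s) (hms : MeasurableSet s) :
    MvPolynomial.restrictTotalDegree (Fin d) ℝ r →ₗ[ℝ] Lp ℝ 2 (volume.restrict s) where
  toFun P := (memL2 P.1 hs hms).toLp (fe P.1)
  map_add' P Q := by
    simp only [Submodule.coe_add]
    rw [MemLp.toLp_congr _ ((memL2 P.1 hs hms).add (memL2 Q.1 hs hms))
      (Filter.EventuallyEq.of_eq (fe_add P.1 Q.1))]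
    exact MemLp.toLp_add _ _
  map_smul' c P := by
    simp only [SetLike.val_smul, RingHom.id_apply]
    rw [MemLp.toLp_congr _ ((memL2 P.1 hs hms).const_smul c)
      (Filter.EventuallyEq.of_eq (fe_smul c P.1))]
    exact MemLp.toLp_const_smul _ _

lemma norm_toL2_sq (r : ℕ) {s : Set (EuclideanSpace ℝ (Fin d))}
    (hs : Bornology.IsBounded s) (hms : MeasurableSet s)
    (P : MvPolynomial.restrictTotalDegree (Fin d) ℝ r) :
    ‖toL2 d r hs hms P‖ ^ 2 = ∫ x in s, fe P.1 x ^ 2 := by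
  rw [← real_inner_self_eq_norm_sq, L2.inner_def]
  refine integral_congr_ae ?_
  filter_upwards [MemLp.coeFn_toLp (memL2 P.1 hs hms)] with x hx
  simp only [toL2, LinearMap.coe_mk, AddHom.coe_mk] at hx ⊢
  rw [hx, RCLike.inner_apply, conj_trivial, sq]

end Stmt13Aux

open Stmt13Aux

/-- weighted domain inverse inequality. -/
theorem stmt13 (d : ℕ) (T : Set (EuclideanSpace ℝ (Fin d)))
    (hTopen : IsOpen T) (hTne : T.Nonempty) (hTbdd : Bornology.IsBounded T)
    (Φ : EuclideanSpace ℝ (Fin d) → ℝ) (hΦc : Continuous Φ)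
    (hΦ0 : ∀ x ∈ T, 0 ≤ Φ x)
    (That : Set (EuclideanSpace ℝ (Fin d))) (hThat : IsOpen That) (hThatne : That.Nonempty)
    (hsub : That ⊆ T) (ρ₀ : ℝ) (hρ : 0 < ρ₀) (hlb : ∀ x ∈ That, ρ₀ ≤ Φ x) :
    ∀ r : ℕ, ∃ C > (0 : ℝ), ∀ q : EuclideanSpace ℝ (Fin d) → ℝ, IsPolyDeg d r q →
      C * ∫ x in T, (q x) ^ 2 ≤ ∫ x in T, Φ x * (q x) ^ 2 := by
  intro r
  have hTm : MeasurableSet T := hTopen.measurableSet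
  have hUm : MeasurableSet That := hThat.measurableSet
  have hUbdd : Bornology.IsBounded That := hTbdd.subset hsub
  set V := MvPolynomial.restrictTotalDegree (Fin d) ℝ r with hV
  haveI : FiniteDimensional ℝ V := inferInstance
  set ιT : V →ₗ[ℝ] Lp ℝ 2 (volume.restrict T) := toL2 d r hTbdd hTm with hιT
  set ιU : V →ₗ[ℝ] Lp ℝ 2 (volume.restrict That) := toL2 d r hUbdd hUm with hιU
  -- injectivity of ιU
  have hinj : Function.Injective ιU := by
    rw [← LinearMap.ker_eq_bot, LinearMap.ker_eq_bot']
    intro P hP0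
    have hae : fe P.1 =ᵐ[volume.restrict That] 0 := by
      have h1 := MemLp.coeFn_toLp (memL2 P.1 hUbdd hUm)
      have h2 : (ιU P : EuclideanSpace ℝ (Fin d) → ℝ) =ᵐ[volume.restrict That] 0 :=
        (Lp.eq_zero_iff_ae_eq_zero).mp hP0
      exact h1.symm.trans h2
    -- fe P.1 vanishes on That
    have hzero : ∀ x ∈ That, fe P.1 x = 0 := by
      by_contra hcon
      push_neg at hcon
      obtain ⟨x₀, hx₀, hne⟩ := hcon
      set U' := That ∩ {x | fe P.1 x ≠ 0} with hU'
      have hU'open : IsOpen U' :=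
        hThat.inter (isOpen_ne_fun (fe_continuous P.1) continuous_const)
      have hU'ne : U'.Nonempty := ⟨x₀, hx₀, hne⟩
      have hpos : 0 < volume U' := hU'open.measure_pos volume hU'ne
      have hnull : volume ({x | fe P.1 x ≠ 0} ∩ That) = 0 := by
        have := ae_iff.mp hae
        rwa [Measure.restrict_apply₀' hUm.nullMeasurableSet] at this
      rw [hU', Set.inter_comm] at hpos
      rw [hnull] at hpos
      exact lt_irrefl 0 hpos
    -- identity theorem: fe P.1 vanishes everywhere
    obtain ⟨x₀, hx₀⟩ := hThatne
    have hEq : Set.EqOn (fe P.1) 0 Set.univ := by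
      refine (fe_analytic P.1).eqOn_zero_of_preconnected_of_eventuallyEq_zero
        isPreconnected_univ (Set.mem_univ x₀) ?_
      filter_upwards [hThat.mem_nhds hx₀] with x hx
      exact hzero x hx
    have hP : P.1 = 0 := by
      apply MvPolynomial.funext
      intro y
      have := hEq (Set.mem_univ ((WithLp.equiv 2 (Fin d → ℝ)).symm y))
      simpa [fe] using this
    exact Subtype.ext hP
  -- transfer map on the range of ιU
  set e : V ≃ₗ[ℝ] LinearMap.range ιU := LinearEquiv.ofInjective ιU hinj with he
  haveI : FiniteDimensional ℝ (LinearMap.range ιU) := e.finiteDimensional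
  set ψ : LinearMap.range ιU →ₗ[ℝ] Lp ℝ 2 (volume.restrict T) :=
    ιT.comp e.symm.toLinearMap with hψ
  set ψc := LinearMap.toContinuousLinearMap ψ with hψc
  set M : ℝ := ‖ψc‖ + 1 with hM
  have hMpos : 0 < M := by positivity
  have hcomb : ∀ P : V, ‖ιT P‖ ≤ M * ‖ιU P‖ := by
    intro P
    have h1 : ψ (e P) = ιT P := by
      simp only [hψ, LinearMap.comp_apply, LinearEquiv.coe_toLinearMap,
        LinearEquiv.symm_apply_apply]
    have h2 : ‖e P‖ = ‖ιU P‖ := by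
      have : ((e P : LinearMap.range ιU) : Lp ℝ 2 (volume.restrict That)) = ιU P := by
        simp [he, LinearEquiv.ofInjective_apply]
      rw [← this]; rfl
    calc ‖ιT P‖ = ‖ψc (e P)‖ := by rw [show ψc (e P) = ψ (e P) from rfl, h1]
      _ ≤ ‖ψc‖ * ‖e P‖ := ψc.le_opNorm _
      _ ≤ M * ‖ιU P‖ := by
          rw [h2]
          exact mul_le_mul_of_nonneg_right (by simp [hM]) (norm_nonneg _)
  set K : ℝ := M ^ 2 with hK
  have hKpos : 0 < K := by positivity
  -- integral comparison
  have hintcomp : ∀ P : V, ∫ x in T, fe P.1 x ^ 2 ≤ K * ∫ x in That, fe P.1 x ^ 2 := by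
    intro P
    have h1 := norm_toL2_sq r hTbdd hTm P
    have h2 := norm_toL2_sq r hUbdd hUm P
    rw [← h1, ← h2]
    calc ‖ιT P‖ ^ 2 ≤ (M * ‖ιU P‖) ^ 2 := by
          apply pow_le_pow_left₀ (norm_nonneg _) (hcomb P)
      _ = K * ‖ιU P‖ ^ 2 := by rw [hK]; ring
  refine ⟨ρ₀ / K, div_pos hρ hKpos, ?_⟩
  rintro q ⟨P, hdeg, hq⟩
  have hqfe : ∀ x, q x = fe P x := fun x => hq x
  set Pv : V := ⟨P, (MvPolynomial.mem_restrictTotalDegree _ _ _).mpr hdeg⟩ with hPv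
  have hfe2cont : Continuous fun x => fe P x ^ 2 := (fe_continuous P).pow 2
  have hint_sq_T : IntegrableOn (fun x => fe P x ^ 2) T :=
    integrableOn_of_bounded hfe2cont hTbdd
  have hint_sq_U : IntegrableOn (fun x => fe P x ^ 2) That :=
    integrableOn_of_bounded hfe2cont hUbdd
  have hint_Φ_T : IntegrableOn (fun x => Φ x * fe P x ^ 2) T :=
    integrableOn_of_bounded (hΦc.mul hfe2cont) hTbdd
  have hint_Φ_U : IntegrableOn (fun x => Φ x * fe P x ^ 2) That :=
    integrableOn_of_bounded (hΦc.mul hfe2cont) hUbdd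
  have hsq_nonneg : ∀ x, (0:ℝ) ≤ fe P x ^ 2 := fun x => sq_nonneg _
  -- chain of inequalities
  have step1 : ∫ x in T, q x ^ 2 ≤ K * ∫ x in That, q x ^ 2 := by
    simp only [hqfe]
    exact hintcomp Pv
  have step2 : ρ₀ * ∫ x in That, q x ^ 2 ≤ ∫ x in That, Φ x * q x ^ 2 := by
    simp only [hqfe]
    rw [← integral_const_mul]
    refine setIntegral_mono_on (hint_sq_U.const_mul ρ₀) hint_Φ_U hUm ?_
    intro x hx
    exact mul_le_mul_of_nonneg_right (hlb x hx) (hsq_nonneg x)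
  have step3 : ∫ x in That, Φ x * q x ^ 2 ≤ ∫ x in T, Φ x * q x ^ 2 := by
    simp only [hqfe]
    refine setIntegral_mono_set hint_Φ_T ?_ (HasSubset.Subset.eventuallyLE hsub)
    have h0 : ∀ᵐ x ∂(volume.restrict T), 0 ≤ Φ x * fe P x ^ 2 :=
      (ae_restrict_iff' hTm).mpr
        (Filter.Eventually.of_forall fun x hx => mul_nonneg (hΦ0 x hx) (sq_nonneg _))
    exact h0
  have hQT : (0:ℝ) ≤ ∫ x in T, q x ^ 2 := by
    refine setIntegral_nonneg hTm fun x _ => sq_nonneg _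
  calc (ρ₀ / K) * ∫ x in T, q x ^ 2
      ≤ (ρ₀ / K) * (K * ∫ x in That, q x ^ 2) :=
        mul_le_mul_of_nonneg_left step1 (div_pos hρ hKpos).le
    _ = ρ₀ * ∫ x in That, q x ^ 2 := by field_simp
    _ ≤ ∫ x in That, Φ x * q x ^ 2 := step2
    _ ≤ ∫ x in T, Φ x * q x ^ 2 := step3
end
end

section
/- Domain inverse inequality: Let T ⊆ ℝ^d be a nonempty bounded open set and let T̂ ⊆ T be a nonempty open subset. Then for every integer r ≥ 0 there exists a constant C > 0 such that ∫_T q(x)² dx ≤ C ∫_{T̂} q(x)² dx for every real polynomial function q on ℝ^d of total degree at most r. -/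
open MeasureTheory
open scoped BigOperators

noncomputable section

lemma continuous_evalP (d : ℕ) (P : MvPolynomial (Fin d) ℝ) :
    Continuous fun x : EuclideanSpace ℝ (Fin d) => MvPolynomial.eval (fun j => x j) P := by
  have h1 : Continuous fun x : EuclideanSpace ℝ (Fin d) => (fun j => x j : Fin d → ℝ) :=
    continuous_pi fun j => (EuclideanSpace.proj j (𝕜 := ℝ)).continuous
  have h2 : Continuous fun v : Fin d → ℝ => MvPolynomial.eval v P :=
    MvPolynomial.continuous_eval P
  exact h2.comp h1

lemma analytic_evalP (d : ℕ) (P : MvPolynomial (Fin d) ℝ) :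
    AnalyticOnNhd ℝ (fun x : EuclideanSpace ℝ (Fin d) => MvPolynomial.eval (fun j => x j) P)
      Set.univ := by
  induction P using MvPolynomial.induction_on with
  | C a => simpa using (analyticOnNhd_const : AnalyticOnNhd ℝ (fun _ => a) _)
  | add p q hp hq => simpa [Pi.add_def] using hp.add hq
  | mul_X p i hp =>
      have hi : AnalyticOnNhd ℝ (fun x : EuclideanSpace ℝ (Fin d) => x i) Set.univ :=
        (EuclideanSpace.proj i (𝕜 := ℝ)).analyticOnNhd Set.univ
      simpa [MvPolynomial.eval_mul] using hp.mul hi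

lemma eq_zero_of_eval_zero_on (d : ℕ) (P : MvPolynomial (Fin d) ℝ)
    (U : Set (EuclideanSpace ℝ (Fin d))) (hU : IsOpen U) (hne : U.Nonempty)
    (h : ∀ x ∈ U, MvPolynomial.eval (fun j => x j) P = 0) : P = 0 := by
  obtain ⟨x₀, hx₀⟩ := hne
  have hz : (fun x : EuclideanSpace ℝ (Fin d) => MvPolynomial.eval (fun j => x j) P)
      =ᶠ[nhds x₀] 0 :=
    Filter.eventuallyEq_of_mem (hU.mem_nhds hx₀) (fun x hx => h x hx)
  have hall := (analytic_evalP d P).eqOn_zero_of_preconnected_of_eventuallyEq_zero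
      isPreconnected_univ (Set.mem_univ x₀) hz
  apply MvPolynomial.funext (q := 0)
  intro y
  have := hall (Set.mem_univ ((EuclideanSpace.equiv (Fin d) ℝ).symm y))
  simpa using this

lemma integrableOn_of_cont (d : ℕ) {f : EuclideanSpace ℝ (Fin d) → ℝ} (hf : Continuous f)
    {S : Set (EuclideanSpace ℝ (Fin d))} (hS : Bornology.IsBounded S) :
    IntegrableOn f S :=
  (hf.continuousOn.integrableOn_compact hS.isCompact_closure).mono_set subset_closure

lemma pos_integral (d : ℕ) {f : EuclideanSpace ℝ (Fin d) → ℝ} (hf : Continuous f)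
    {U : Set (EuclideanSpace ℝ (Fin d))} (hU : IsOpen U) (hUb : Bornology.IsBounded U)
    {x₀ : EuclideanSpace ℝ (Fin d)} (hx₀ : x₀ ∈ U) (hfx : f x₀ ≠ 0) :
    0 < ∫ x in U, (f x) ^ 2 := by
  have hint : IntegrableOn (fun x => (f x) ^ 2) U :=
    integrableOn_of_cont d (hf.pow 2) hUb
  rw [setIntegral_pos_iff_support_of_nonneg_ae
      (Filter.Eventually.of_forall (fun x => sq_nonneg (f x))) hint]
  have hsub : (f ⁻¹' {0}ᶜ) ∩ U ⊆ (Function.support fun x => (f x) ^ 2) ∩ U := by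
    intro x hx
    refine ⟨?_, hx.2⟩
    simp only [Function.mem_support]
    have : f x ≠ 0 := hx.1
    positivity
  refine lt_of_lt_of_le ?_ (measure_mono hsub)
  exact ((isOpen_compl_singleton.preimage hf).inter hU).measure_pos volume ⟨x₀, hfx, hx₀⟩

set_option maxHeartbeats 1000000 in
set_option synthInstance.maxHeartbeats 400000 in
/-- domain inverse inequality. -/
theorem stmt14 (d : ℕ) (T : Set (EuclideanSpace ℝ (Fin d)))
    (hTopen : IsOpen T) (hTne : T.Nonempty) (hTbdd : Bornology.IsBounded T)
    (That : Set (EuclideanSpace ℝ (Fin d))) (hThat : IsOpen That) (hThatne : That.Nonempty)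
    (hsub : That ⊆ T) :
    ∀ r : ℕ, ∃ C > (0 : ℝ), ∀ q : EuclideanSpace ℝ (Fin d) → ℝ, IsPolyDeg d r q →
      ∫ x in T, (q x) ^ 2 ≤ C * ∫ x in That, (q x) ^ 2 := by
  intro r
  classical
  set V := MvPolynomial.restrictTotalDegree (Fin d) ℝ r with hV
  haveI : Module.Finite ℝ V := inferInstance
  haveI : Module.Free ℝ V := Module.Free.of_divisionRing ℝ V
  set n := Module.finrank ℝ V with hn
  let e : (Fin n → ℝ) ≃ₗ[ℝ] V := (Module.finBasis ℝ V).equivFun.symm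
  let ev : (Fin n → ℝ) → EuclideanSpace ℝ (Fin d) → ℝ :=
    fun c x => MvPolynomial.eval (fun j => x j) ((e c : MvPolynomial (Fin d) ℝ))
  have hev_cont : ∀ c, Continuous (ev c) := fun c => continuous_evalP d _
  have hev_add : ∀ c c' x, ev (c + c') x = ev c x + ev c' x := by
    intro c c' x
    simp only [ev, map_add, Submodule.coe_add]
  have hev_smul : ∀ (t : ℝ) c x, ev (t • c) x = t * ev c x := by
    intro t c x
    simp only [ev, _root_.map_smul, Submodule.coe_smul, MvPolynomial.smul_eval]
  -- integrability
  have hint : ∀ (c c' : Fin n → ℝ) (S : Set (EuclideanSpace ℝ (Fin d))), S ⊆ T →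
      IntegrableOn (fun x => ev c x * ev c' x) S :=
    fun c c' S hS =>
      (integrableOn_of_cont d ((hev_cont c).mul (hev_cont c')) hTbdd).mono_set hS
  -- continuity of the quadratic forms
  have key : ∀ (S : Set (EuclideanSpace ℝ (Fin d))), S ⊆ T →
      Continuous fun c => ∫ x in S, (ev c x) ^ 2 := by
    intro S hS
    let M : (Fin n → ℝ) →ₗ[ℝ] (Fin n → ℝ) →ₗ[ℝ] ℝ :=
      LinearMap.mk₂ ℝ (fun c c' => ∫ x in S, ev c x * ev c' x)
        (fun c₁ c₂ c' => by
          have h : ∀ x, ev (c₁ + c₂) x * ev c' x = ev c₁ x * ev c' x + ev c₂ x * ev c' x := by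
            intro x; rw [hev_add]; ring
          simp only [h]
          exact integral_add (hint c₁ c' S hS) (hint c₂ c' S hS))
        (fun t c c' => by
          have h : ∀ x, ev (t • c) x * ev c' x = t * (ev c x * ev c' x) := by
            intro x; rw [hev_smul]; ring
          simp only [h, integral_const_mul, smul_eq_mul])
        (fun c c₁ c₂ => by
          have h : ∀ x, ev c x * ev (c₁ + c₂) x = ev c x * ev c₁ x + ev c x * ev c₂ x := by
            intro x; rw [hev_add]; ring
          simp only [h]
          exact integral_add (hint c c₁ S hS) (hint c c₂ S hS))
        (fun t c c' => by
          have h : ∀ x, ev c x * ev (t • c') x = t * (ev c x * ev c' x) := by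
            intro x; rw [hev_smul]; ring
          simp only [h, integral_const_mul, smul_eq_mul])
    let M' : (Fin n → ℝ) →ₗ[ℝ] ((Fin n → ℝ) →L[ℝ] ℝ) :=
      (LinearMap.toContinuousLinearMap :
        ((Fin n → ℝ) →ₗ[ℝ] ℝ) ≃ₗ[ℝ] ((Fin n → ℝ) →L[ℝ] ℝ)).toLinearMap.comp M
    have hM' : Continuous M' := M'.continuous_of_finiteDimensional
    have hc : Continuous fun c => (M' c) c :=
      isBoundedBilinearMap_apply.continuous.comp (hM'.prodMk continuous_id)
    have heq : (fun c => ∫ x in S, (ev c x) ^ 2) = fun c => (M' c) c := by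
      funext c
      simp only [M', M, LinearMap.comp_apply, LinearEquiv.coe_coe,
        LinearMap.coe_toContinuousLinearMap', LinearMap.mk₂_apply, pow_two]
    rw [heq]
    exact hc
  have hFcont := key T (le_refl T)
  have hGcont := key That hsub
  -- positivity of G off 0
  have hGpos : ∀ c : Fin n → ℝ, c ≠ 0 → 0 < ∫ x in That, (ev c x) ^ 2 := by
    intro c hc
    have hP : ((e c : V) : MvPolynomial (Fin d) ℝ) ≠ 0 := by
      intro h
      apply hc
      have h0 : e c = 0 := Subtype.ext h
      have := e.injective (by rw [h0, map_zero] : e c = e 0)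
      exact this
    have hne : ¬ ∀ x ∈ That, ev c x = 0 := fun h =>
      hP (eq_zero_of_eval_zero_on d _ That hThat hThatne h)
    push_neg at hne
    obtain ⟨x₀, hx₀, hne0⟩ := hne
    exact pos_integral d (hev_cont c) hThat (hTbdd.subset hsub) hx₀ hne0
  -- homogeneity
  have hhom : ∀ (S : Set (EuclideanSpace ℝ (Fin d))) (s : ℝ) (c : Fin n → ℝ),
      (∫ x in S, (ev (s • c) x) ^ 2) = s ^ 2 * ∫ x in S, (ev c x) ^ 2 := by
    intro S s c
    rw [← integral_const_mul]
    congr 1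
    funext x
    rw [hev_smul]
    ring
  -- the space is nontrivial
  have hn0 : 0 < n := by
    rw [hn]
    rw [Module.finrank_pos_iff]
    refine ⟨⟨(1 : MvPolynomial (Fin d) ℝ), ?_⟩, 0, ?_⟩
    · rw [MvPolynomial.mem_restrictTotalDegree]
      simp [MvPolynomial.totalDegree_one]
    · intro h
      have := congrArg (Subtype.val) h
      simp at this
  haveI : Nonempty (Fin n) := Fin.pos_iff_nonempty.mp hn0
  haveI : Nontrivial (Fin n → ℝ) := inferInstance
  -- compactness argument on the unit sphere
  have hsne : (Metric.sphere (0 : Fin n → ℝ) 1).Nonempty :=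
    NormedSpace.sphere_nonempty.mpr zero_le_one
  have hne0' : ∀ c ∈ Metric.sphere (0 : Fin n → ℝ) 1, c ≠ 0 := by
    intro c hc
    have : ‖c‖ = 1 := by simpa using hc
    intro h0
    rw [h0] at this
    simp at this
  have hcontOn : ContinuousOn
      (fun c => (∫ x in T, (ev c x) ^ 2) / ∫ x in That, (ev c x) ^ 2)
      (Metric.sphere (0 : Fin n → ℝ) 1) :=
    (hFcont.continuousOn).div (hGcont.continuousOn)
      (fun c hc => (hGpos c (hne0' c hc)).ne')
  obtain ⟨c₀, hc₀S, hmax⟩ := (isCompact_sphere (0 : Fin n → ℝ) 1).exists_isMaxOn hsne hcontOn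
  set C : ℝ := max ((∫ x in T, (ev c₀ x) ^ 2) / ∫ x in That, (ev c₀ x) ^ 2) 1 with hC
  have hCpos : 0 < C := lt_of_lt_of_le zero_lt_one (le_max_right _ _)
  have hsphere_bound : ∀ c ∈ Metric.sphere (0 : Fin n → ℝ) 1,
      (∫ x in T, (ev c x) ^ 2) ≤ C * ∫ x in That, (ev c x) ^ 2 := by
    intro c hc
    have h1 : (∫ x in T, (ev c x) ^ 2) / (∫ x in That, (ev c x) ^ 2) ≤ C :=
      le_trans (hmax hc) (le_max_left _ _)
    have h2 := hGpos c (hne0' c hc)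
    calc (∫ x in T, (ev c x) ^ 2)
        = ((∫ x in T, (ev c x) ^ 2) / (∫ x in That, (ev c x) ^ 2)) *
            (∫ x in That, (ev c x) ^ 2) := by field_simp
      _ ≤ C * ∫ x in That, (ev c x) ^ 2 := mul_le_mul_of_nonneg_right h1 h2.le
  refine ⟨C, hCpos, ?_⟩
  rintro q ⟨P, hdeg, hq⟩
  have hPmem : P ∈ V := (MvPolynomial.mem_restrictTotalDegree _ _ _).mpr hdeg
  set c : Fin n → ℝ := e.symm ⟨P, hPmem⟩ with hc
  have hevc : ∀ x, q x = ev c x := by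
    intro x
    rw [hq x]
    simp only [ev, hc, LinearEquiv.apply_symm_apply]
  by_cases h0 : c = 0
  · have hq0 : ∀ x, q x = 0 := by
      intro x
      rw [hevc x, h0]
      simp only [ev, map_zero, Submodule.coe_zero, MvPolynomial.eval_zero]
    simp only [hq0]
    simp
  · set t : ℝ := ‖c‖ with ht
    have htpos : 0 < t := norm_pos_iff.mpr h0
    set c' : Fin n → ℝ := t⁻¹ • c with hc'
    have hc'S : c' ∈ Metric.sphere (0 : Fin n → ℝ) 1 := by
      have h1 : ‖c'‖ = 1 := by
        rw [hc', norm_smul, norm_inv, Real.norm_eq_abs, abs_of_pos htpos, ← ht,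
          inv_mul_cancel₀ htpos.ne']
      simpa using h1
    have hrec : t • c' = c := by
      rw [hc', smul_smul, mul_inv_cancel₀ htpos.ne', one_smul]
    have hF : (∫ x in T, (q x) ^ 2) = t ^ 2 * ∫ x in T, (ev c' x) ^ 2 := by
      rw [← hhom T t c', hrec]
      congr 1
      funext x
      rw [hevc x]
    have hG : (∫ x in That, (q x) ^ 2) = t ^ 2 * ∫ x in That, (ev c' x) ^ 2 := by
      rw [← hhom That t c', hrec]
      congr 1
      funext x
      rw [hevc x]
    rw [hF, hG]
    calc t ^ 2 * ∫ x in T, (ev c' x) ^ 2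
        ≤ t ^ 2 * (C * ∫ x in That, (ev c' x) ^ 2) :=
          mul_le_mul_of_nonneg_left (hsphere_bound c' hc'S) (sq_nonneg t)
      _ = C * (t ^ 2 * ∫ x in That, (ev c' x) ^ 2) := by ring
end
end
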